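/- Let V = (ZMod 2)^n, let f, g : V → ℝ, let D_f and D_g be the diagonal matrices with (D_f)_{x,x} = f(x) and (D_g)_{y,y} = g(y), let H be the Hadamard matrix with entries H_{x,y} = 2^{−n/2}(−1)^{x·y}, and let C = H·D_g·H·D_f·H. Define the forrelation Φ = 2^{−3n/2} Σ_{x,y ∈ V} f(x)·(−1)^{x·y}·g(y). Then (1/2^n) Σ_{w,z ∈ V} (−1)^{w·z} |C_{z,w}|² = Φ². -/

import Mathlib

open Matrix
open scoped ComplexOrder

def signOf (a : ZMod 2) : ℝ := if a = 0 then 1 else -1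

lemma signOf_add (a b : ZMod 2) : signOf (a + b) = signOf a * signOf b := by
  have h : ∀ c : ZMod 2, c = 0 ∨ c = 1 := by decide
  rcases h a with ha | ha <;> rcases h b with hb | hb <;>
    simp [ha, hb, signOf, show (1:ZMod 2)+1 = 0 by decide]

lemma signOf_sq (a : ZMod 2) : signOf a * signOf a = 1 := by
  have h : ∀ c : ZMod 2, c = 0 ∨ c = 1 := by decide
  rcases h a with ha | ha <;> simp [ha, signOf]

lemma sum_signOf {n : ℕ} (u : Fin n → ZMod 2) :
    ∑ v : Fin n → ZMod 2, signOf (v ⬝ᵥ u) = if u = 0 then (2:ℝ)^n else 0 := by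
  by_cases hu : u = 0
  · subst hu
    simp [signOf, dotProduct_zero, Finset.card_univ, Fintype.card_fun]
  · rw [if_neg hu]
    obtain ⟨i, hi⟩ : ∃ i, u i ≠ 0 := by
      by_contra h; push_neg at h; exact hu (funext h)
    have hi1 : u i = 1 := by
      have : ∀ c : ZMod 2, c ≠ 0 → c = 1 := by decide
      exact this _ hi
    have key : ∑ v : Fin n → ZMod 2, signOf (v ⬝ᵥ u)
        = - ∑ v : Fin n → ZMod 2, signOf (v ⬝ᵥ u) := by
      calc ∑ v : Fin n → ZMod 2, signOf (v ⬝ᵥ u)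
          = ∑ v : Fin n → ZMod 2, signOf ((v + Pi.single i 1) ⬝ᵥ u) :=
            (Equiv.sum_comp (Equiv.addRight (Pi.single i 1)) fun v => signOf (v ⬝ᵥ u)).symm
        _ = - ∑ v : Fin n → ZMod 2, signOf (v ⬝ᵥ u) := by
            rw [← Finset.sum_neg_distrib]
            refine Finset.sum_congr rfl fun v _ => ?_
            rw [add_dotProduct, single_dotProduct, hi1, mul_one,
              signOf_add]
            simp [signOf]
    linarith

theorem half_bqp_two_forrelation (n : ℕ) (f g : (Fin n → ZMod 2) → ℝ)
    (Df Dg H C : Matrix (Fin n → ZMod 2) (Fin n → ZMod 2) ℂ)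
    (hDf : Df = Matrix.diagonal fun x => ((f x : ℝ) : ℂ))
    (hDg : Dg = Matrix.diagonal fun y => ((g y : ℝ) : ℂ))
    (hH : H = Matrix.of fun x y => (((Real.sqrt (2 ^ n))⁻¹ * signOf (x ⬝ᵥ y) : ℝ) : ℂ))
    (hC : C = H * Dg * H * Df * H)
    (Φ : ℝ)
    (hΦ : Φ = (Real.sqrt (2 ^ n) ^ 3)⁻¹ * ∑ x, ∑ y, f x * signOf (x ⬝ᵥ y) * g y) :
    (1 / 2 ^ n) * ∑ w, ∑ z, signOf (w ⬝ᵥ z) * ‖C z w‖ ^ 2 = Φ ^ 2 := by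
  set s : ℝ := (Real.sqrt (2 ^ n))⁻¹ with hs
  set B : (Fin n → ZMod 2) → ℝ := fun y => ∑ x, f x * signOf (x ⬝ᵥ y) with hB
  set A : (Fin n → ZMod 2) → (Fin n → ZMod 2) → ℝ :=
    fun y w => g y * ∑ x, signOf (y ⬝ᵥ x) * f x * signOf (x ⬝ᵥ w) with hA
  set T : (Fin n → ZMod 2) → (Fin n → ZMod 2) → ℝ :=
    fun z w => ∑ y, signOf (z ⬝ᵥ y) * A y w with hT
  have hvv : ∀ v : Fin n → ZMod 2, v + v = 0 :=
    fun v => funext fun i => CharTwo.add_self_eq_zero _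
  -- entries of C
  have hCzw : ∀ z w, C z w = ((s ^ 3 * T z w : ℝ) : ℂ) := by
    intro z w
    have hreal : ∑ x, (∑ y, (s * signOf (z ⬝ᵥ y)) * g y * (s * signOf (y ⬝ᵥ x))) * f x *
        (s * signOf (x ⬝ᵥ w)) = s ^ 3 * T z w := by
      calc ∑ x, (∑ y, (s * signOf (z ⬝ᵥ y)) * g y * (s * signOf (y ⬝ᵥ x))) * f x *
            (s * signOf (x ⬝ᵥ w))
          = ∑ x, ∑ y, (s * signOf (z ⬝ᵥ y)) * g y * (s * signOf (y ⬝ᵥ x)) * f x *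
            (s * signOf (x ⬝ᵥ w)) := by
            refine Finset.sum_congr rfl fun x _ => ?_
            rw [Finset.sum_mul, Finset.sum_mul]
        _ = ∑ y, ∑ x, (s * signOf (z ⬝ᵥ y)) * g y * (s * signOf (y ⬝ᵥ x)) * f x *
            (s * signOf (x ⬝ᵥ w)) := Finset.sum_comm
        _ = s ^ 3 * T z w := by
            simp only [hT, hA]
            rw [Finset.mul_sum]
            refine Finset.sum_congr rfl fun y _ => ?_
            rw [Finset.mul_sum, Finset.mul_sum, Finset.mul_sum]
            refine Finset.sum_congr rfl fun x _ => ?_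
            ring
    rw [hC, hDf, hDg, hH]
    simp only [Matrix.mul_apply, Matrix.mul_diagonal, Matrix.of_apply,
      Matrix.diagonal_apply, ite_mul, zero_mul, mul_ite, mul_zero,
      Finset.sum_ite_eq, Finset.sum_ite_eq', Finset.mem_univ, if_true]
    exact_mod_cast hreal
  have habs : ∀ z w, ‖C z w‖ ^ 2 = (s ^ 3 * T z w) ^ 2 := by
    intro z w; rw [hCzw, Complex.norm_real, Real.norm_eq_abs, sq_abs]
  -- the main combinatorial identity
  have step1 : ∀ w, ∑ z, signOf (w ⬝ᵥ z) * T z w ^ 2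
      = ∑ y, (2:ℝ)^n * (A y w * A (w + y) w) := by
    intro w
    have hcond : ∀ y y' : Fin n → ZMod 2, (w + y + y' = 0) ↔ (y' = w + y) := by
      intro y y'
      constructor
      · intro h
        have h2 := congrArg (fun t => t + y') h
        simp only [zero_add] at h2
        rw [add_assoc, hvv, add_zero] at h2
        exact h2.symm
      · intro h; rw [h, hvv]
    calc ∑ z, signOf (w ⬝ᵥ z) * T z w ^ 2
        = ∑ z, ∑ y, ∑ y', signOf (w ⬝ᵥ z) *
            ((signOf (z ⬝ᵥ y) * signOf (z ⬝ᵥ y')) * (A y w * A y' w)) := by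
          refine Finset.sum_congr rfl fun z _ => ?_
          simp only [hT]
          rw [sq, Finset.sum_mul_sum, Finset.mul_sum]
          refine Finset.sum_congr rfl fun y _ => ?_
          rw [Finset.mul_sum]
          refine Finset.sum_congr rfl fun y' _ => ?_
          ring
      _ = ∑ y, ∑ y', ∑ z, signOf (w ⬝ᵥ z) *
            ((signOf (z ⬝ᵥ y) * signOf (z ⬝ᵥ y')) * (A y w * A y' w)) := by
          rw [Finset.sum_comm]
          exact Finset.sum_congr rfl fun y _ => Finset.sum_comm
      _ = ∑ y, ∑ y', (A y w * A y' w) * ∑ z, signOf (z ⬝ᵥ (w + y + y')) := by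
          refine Finset.sum_congr rfl fun y _ => Finset.sum_congr rfl fun y' _ => ?_
          rw [Finset.mul_sum]
          refine Finset.sum_congr rfl fun z _ => ?_
          rw [dotProduct_add, dotProduct_add, signOf_add, signOf_add,
            dotProduct_comm w z]
          ring
      _ = ∑ y, ∑ y', (A y w * A y' w) * (if y' = w + y then (2:ℝ)^n else 0) := by
          refine Finset.sum_congr rfl fun y _ => Finset.sum_congr rfl fun y' _ => ?_
          rw [sum_signOf, if_congr (hcond y y') rfl rfl]
      _ = ∑ y, (2:ℝ)^n * (A y w * A (w + y) w) := by
          refine Finset.sum_congr rfl fun y _ => ?_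
          simp [mul_ite, Finset.sum_ite_eq', mul_comm]
  have step2 : ∀ y, ∑ w, A y w * A (w + y) w = (B y * g y) * ∑ u, B u * g u := by
    intro y
    have hre : ∑ w, A y w * A (w + y) w = ∑ u, A y (u + y) * A u (u + y) := by
      refine (Equiv.sum_comp (Equiv.addRight y) fun w => A y w * A (w + y) w).symm.trans ?_
      refine Finset.sum_congr rfl fun u _ => ?_
      simp only [Equiv.coe_addRight]
      rw [add_assoc, hvv, add_zero]
    rw [hre]
    have hA1 : ∀ u, A y (u + y) = g y * B u := by
      intro u
      simp only [hA, hB]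
      congr 1
      refine Finset.sum_congr rfl fun x _ => ?_
      rw [dotProduct_add, signOf_add, dotProduct_comm y x]
      have hsq := signOf_sq (x ⬝ᵥ y)
      linear_combination f x * signOf (x ⬝ᵥ u) * hsq
    have hA2 : ∀ u, A u (u + y) = g u * B y := by
      intro u
      simp only [hA, hB]
      congr 1
      refine Finset.sum_congr rfl fun x _ => ?_
      rw [dotProduct_add, signOf_add, dotProduct_comm u x]
      have hsq := signOf_sq (x ⬝ᵥ u)
      linear_combination f x * signOf (x ⬝ᵥ y) * hsq
    calc ∑ u, A y (u + y) * A u (u + y)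
        = ∑ u, (B y * g y) * (B u * g u) := by
          refine Finset.sum_congr rfl fun u _ => ?_
          rw [hA1, hA2]; ring
      _ = (B y * g y) * ∑ u, B u * g u := by rw [← Finset.mul_sum]
  -- put it together
  have hK : ∑ w, ∑ z, signOf (w ⬝ᵥ z) * T z w ^ 2
      = (2:ℝ)^n * (∑ y, B y * g y) ^ 2 := by
    calc ∑ w, ∑ z, signOf (w ⬝ᵥ z) * T z w ^ 2
        = ∑ w, ∑ y, (2:ℝ)^n * (A y w * A (w + y) w) := Finset.sum_congr rfl fun w _ => step1 w
      _ = ∑ y, ∑ w, (2:ℝ)^n * (A y w * A (w + y) w) := Finset.sum_comm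
      _ = ∑ y, (2:ℝ)^n * ((B y * g y) * ∑ u, B u * g u) := by
          refine Finset.sum_congr rfl fun y _ => ?_
          rw [← Finset.mul_sum, step2 y]
      _ = (2:ℝ)^n * (∑ y, B y * g y) ^ 2 := by
          rw [← Finset.mul_sum, ← Finset.sum_mul, sq]
  have hS : Φ = s ^ 3 * ∑ y, B y * g y := by
    rw [hΦ, ← inv_pow]
    congr 1
    rw [Finset.sum_comm]
    refine Finset.sum_congr rfl fun y _ => ?_
    simp only [hB]
    rw [Finset.sum_mul]
  have h2n : ((2:ℝ)^n) ≠ 0 := by positivity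
  calc (1 / 2 ^ n) * ∑ w, ∑ z, signOf (w ⬝ᵥ z) * ‖C z w‖ ^ 2
      = (1 / 2 ^ n) * ∑ w, ∑ z, signOf (w ⬝ᵥ z) * (s ^ 3 * T z w) ^ 2 := by
        simp only [habs]
    _ = (1 / 2 ^ n) * ((s ^ 3) ^ 2 * ∑ w, ∑ z, signOf (w ⬝ᵥ z) * T z w ^ 2) := by
        congr 1
        rw [Finset.mul_sum]
        refine Finset.sum_congr rfl fun w _ => ?_
        rw [Finset.mul_sum]
        refine Finset.sum_congr rfl fun z _ => ?_
        ring
    _ = (1 / 2 ^ n) * ((s ^ 3) ^ 2 * ((2:ℝ)^n * (∑ y, B y * g y) ^ 2)) := by rw [hK]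
    _ = (s ^ 3 * ∑ y, B y * g y) ^ 2 := by field_simp
    _ = Φ ^ 2 := by rw [hS]
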